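/- The dual norm of the vector k-norm ‖x‖_{(k)} = Σ_{i=1}^k |x|_i^↓ on ℝⁿ is x ↦ max(‖x‖_∞, ‖x‖₁/k). -/

import Mathlib

open Finset

/-- `dsort x i` is the `i`-th entry of the non-increasing rearrangement of `|x|`. -/
noncomputable def dsort {n : ℕ} (x : Fin n → ℝ) : Fin n → ℝ :=
  fun i => |x (Tuple.sort (fun j => |x j|) i.rev)|

/-- The vector `k`-norm `‖x‖_{(k)} = Σ_{i<k} |x|_i^↓`. -/
noncomputable def kNormU {n : ℕ} (k : ℕ) (x : Fin n → ℝ) : ℝ :=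
  ∑ i : Fin n, if (i : ℕ) < k then dsort x i else 0

/-- The dual norm of a norm `N` on `ℝⁿ`. -/
noncomputable def dualNorm {n : ℕ} (N : (Fin n → ℝ) → ℝ) (x : Fin n → ℝ) : ℝ :=
  sSup {r | ∃ y : Fin n → ℝ, N y ≤ 1 ∧ r = ∑ i, x i * y i}

lemma dsort_nonneg {n : ℕ} (x : Fin n → ℝ) (i : Fin n) : 0 ≤ dsort x i := abs_nonneg _

lemma dsort_anti {n : ℕ} (x : Fin n → ℝ) : Antitone (dsort x) := by
  intro i j hij
  exact Tuple.monotone_sort (fun j => |x j|) (Fin.rev_le_rev.mpr hij)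

lemma sum_dsort_comp {n : ℕ} (x : Fin n → ℝ) (g : ℝ → ℝ) :
    ∑ i, g (dsort x i) = ∑ i, g (|x i|) := by
  exact Fintype.sum_equiv (Fin.revPerm.trans (Tuple.sort (fun j => |x j|)))
    (fun i => g (dsort x i)) (fun i => g (|x i|)) (fun i => rfl)

lemma sum_ite_lt {n k : ℕ} (hkn : k ≤ n) (c : ℝ) :
    ∑ i : Fin n, (if (i : ℕ) < k then c else 0) = k * c := by
  rw [Fin.sum_univ_eq_sum_range (fun i => if i < k then c else 0) n]
  rw [← Finset.sum_subset (Finset.range_subset_range.mpr hkn)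
    (by intro i _ hi; simp only [Finset.mem_range, not_lt] at hi; simp [Nat.not_lt.mpr hi])]
  have h : ∀ i ∈ Finset.range k, (if i < k then c else 0) = c :=
    fun i hi => by simp [Finset.mem_range.mp hi]
  rw [Finset.sum_congr rfl h, Finset.sum_const, Finset.card_range, nsmul_eq_mul]

lemma pair_le {n k : ℕ} (hk1 : 1 ≤ k) (hkn : k ≤ n) (x y : Fin n → ℝ)
    (hy : kNormU k y ≤ 1) :
    ∑ i, x i * y i ≤ max (⨆ i : Fin n, |x i|) ((∑ i, |x i|) / (k : ℝ)) := by
  have hn : 0 < n := lt_of_lt_of_le hk1 hkn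
  have hk0 : (0:ℝ) < k := by exact_mod_cast hk1
  set M := max (⨆ i : Fin n, |x i|) ((∑ i, |x i|) / (k : ℝ)) with hM
  have hbdd : BddAbove (Set.range fun i => |x i|) := Set.Finite.bddAbove (Set.finite_range _)
  have hA : ∀ i, |x i| ≤ M := fun i => le_trans (le_ciSup hbdd i) (le_max_left _ _)
  have hM0 : 0 ≤ M := le_trans (abs_nonneg (x ⟨0, hn⟩)) (hA _)
  have hS : ∑ i, |x i| ≤ (k : ℝ) * M := by
    have h := le_max_right (⨆ i : Fin n, |x i|) ((∑ i, |x i|) / (k : ℝ))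
    calc ∑ i, |x i| = ((∑ i, |x i|) / (k:ℝ)) * k := by field_simp
    _ ≤ M * k := mul_le_mul_of_nonneg_right h hk0.le
    _ = (k:ℝ) * M := mul_comm _ _
  set ik : Fin n := ⟨k-1, by omega⟩ with hik
  set t := dsort y ik with ht
  have ht0 : 0 ≤ t := dsort_nonneg y ik
  have hlow : ∀ i : Fin n, (i:ℕ) < k → t ≤ dsort y i := fun i hi =>
    dsort_anti y (show i ≤ ik from Fin.le_def.mpr (by simp [hik]; omega))
  have hhigh : ∀ i : Fin n, ¬((i:ℕ) < k) → dsort y i ≤ t := fun i hi =>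
    dsort_anti y (show ik ≤ i from Fin.le_def.mpr (by simp [hik]; omega))
  have key : ∑ i, max (|y i| - t) 0 ≤ 1 - (k:ℝ) * t := by
    have h1 : ∑ i, max (|y i| - t) 0 = ∑ i : Fin n, max (dsort y i - t) 0 :=
      (sum_dsort_comp y (fun s => max (s - t) 0)).symm
    have h2 : ∀ i : Fin n, max (dsort y i - t) 0 =
        (if (i:ℕ) < k then dsort y i else 0) - (if (i:ℕ) < k then t else 0) := by
      intro i; split
      · rw [max_eq_left (sub_nonneg.mpr (hlow i ‹_›))]
      · rw [max_eq_right (sub_nonpos.mpr (hhigh i ‹_›))]; ring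
    rw [h1, Finset.sum_congr rfl (fun i _ => h2 i), Finset.sum_sub_distrib, sum_ite_lt hkn t]
    exact sub_le_sub_right hy _
  calc ∑ i, x i * y i ≤ ∑ i, |x i| * |y i| := Finset.sum_le_sum fun i _ => by
        rw [← abs_mul]; exact le_abs_self _
  _ ≤ ∑ i, |x i| * (max (|y i| - t) 0 + t) := Finset.sum_le_sum fun i _ =>
        mul_le_mul_of_nonneg_left
          (by have := le_max_left (|y i| - t) 0; linarith) (abs_nonneg _)
  _ = ∑ i, |x i| * max (|y i| - t) 0 + ∑ i, |x i| * t := by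
        rw [← Finset.sum_add_distrib]; exact Finset.sum_congr rfl fun i _ => by ring
  _ ≤ ∑ i, M * max (|y i| - t) 0 + (∑ i, |x i|) * t := by
        refine add_le_add (Finset.sum_le_sum fun i _ =>
          mul_le_mul_of_nonneg_right (hA i) (le_max_right _ _)) (le_of_eq ?_)
        rw [Finset.sum_mul]
  _ = M * (∑ i, max (|y i| - t) 0) + (∑ i, |x i|) * t := by rw [Finset.mul_sum]
  _ ≤ M * (1 - (k:ℝ) * t) + ((k:ℝ) * M) * t :=
        add_le_add (mul_le_mul_of_nonneg_left key hM0) (mul_le_mul_of_nonneg_right hS ht0)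
  _ = M := by ring

lemma kNormU_le_sum {n k : ℕ} (y : Fin n → ℝ) : kNormU k y ≤ ∑ i, |y i| := by
  calc kNormU k y ≤ ∑ i, dsort y i :=
        Finset.sum_le_sum fun i _ => by
          split
          · exact le_rfl
          · exact dsort_nonneg y i
  _ = ∑ i, |y i| := sum_dsort_comp y id

/-- The dual norm of the vector `k`-norm is `max(‖x‖_∞, ‖x‖₁/k)`. -/
theorem dual_of_k_norm {n k : ℕ} (hn : 0 < n) (hk1 : 1 ≤ k) (hkn : k ≤ n)
    (x : Fin n → ℝ) :
    dualNorm (kNormU k) x = max (⨆ i : Fin n, |x i|) ((∑ i, |x i|) / (k : ℝ)) := by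
  have hk0 : (0:ℝ) < k := by exact_mod_cast hk1
  haveI : Nonempty (Fin n) := ⟨⟨0, hn⟩⟩
  have hbdd : BddAbove (Set.range fun i => |x i|) := Set.Finite.bddAbove (Set.finite_range _)
  set sgn : ℝ → ℝ := fun z => if z < 0 then -1 else 1 with hsgn
  have hsgn_abs : ∀ z : ℝ, |sgn z| = 1 := by
    intro z; rw [hsgn]; dsimp only; split <;> simp
  have hsgn_mul : ∀ z : ℝ, z * sgn z = |z| := by
    intro z; rw [hsgn]; dsimp only; split
    · rw [abs_of_neg ‹_›]; ring
    · rw [abs_of_nonneg (not_lt.mp ‹_›)]; ring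
  set S : Set ℝ := {r | ∃ y : Fin n → ℝ, kNormU k y ≤ 1 ∧ r = ∑ i, x i * y i} with hS
  -- membership of the sup norm
  obtain ⟨i0, -, hi0⟩ := Finset.exists_max_image (Finset.univ : Finset (Fin n))
    (fun i => |x i|) ⟨⟨0, hn⟩, Finset.mem_univ _⟩
  have hsup : (⨆ i, |x i|) = |x i0| :=
    le_antisymm (ciSup_le fun i => hi0 i (Finset.mem_univ _)) (le_ciSup hbdd i0)
  have h1 : (⨆ i, |x i|) ∈ S := by
    refine ⟨fun i => if i = i0 then sgn (x i0) else 0, ?_, ?_⟩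
    · refine le_trans (kNormU_le_sum _) ?_
      have : ∀ i : Fin n, |if i = i0 then sgn (x i0) else 0| = if i = i0 then 1 else 0 := by
        intro i; split <;> simp [hsgn_abs]
      rw [Finset.sum_congr rfl fun i _ => this i, Finset.sum_ite_eq' Finset.univ i0 (fun _ => (1:ℝ))]
      simp
    · rw [hsup]
      have : ∀ i : Fin n, x i * (if i = i0 then sgn (x i0) else 0)
          = if i = i0 then |x i0| else 0 := by
        intro i; split
        · subst ‹i = i0›; rw [hsgn_mul]
        · ring
      rw [Finset.sum_congr rfl fun i _ => this i,
        Finset.sum_ite_eq' Finset.univ i0 (fun _ => |x i0|)]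
      simp
  -- membership of the scaled ℓ¹ norm
  have h2 : ((∑ i, |x i|) / (k : ℝ)) ∈ S := by
    refine ⟨fun i => sgn (x i) / k, ?_, ?_⟩
    · have hd : ∀ i : Fin n, dsort (fun i => sgn (x i) / k) i ≤ 1 / k := by
        intro i
        show |sgn (x _) / (k:ℝ)| ≤ 1 / k
        rw [abs_div, hsgn_abs, abs_of_pos hk0]
      calc kNormU k (fun i => sgn (x i) / k)
          ≤ ∑ i : Fin n, (if (i:ℕ) < k then 1 / (k:ℝ) else 0) :=
            Finset.sum_le_sum fun i _ => by
              split
              · exact hd i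
              · exact le_rfl
        _ = (k : ℝ) * (1 / k) := sum_ite_lt hkn _
        _ ≤ 1 := by field_simp; exact le_rfl
    · rw [eq_comm, Finset.sum_div]
      refine Finset.sum_congr rfl fun i _ => ?_
      rw [← hsgn_mul (x i)]; ring
  have hub : ∀ r ∈ S, r ≤ max (⨆ i, |x i|) ((∑ i, |x i|) / (k : ℝ)) := by
    rintro r ⟨y, hy, rfl⟩
    exact pair_le hk1 hkn x y hy
  have hmem : max (⨆ i, |x i|) ((∑ i, |x i|) / (k : ℝ)) ∈ S := by
    rcases max_choice (⨆ i, |x i|) ((∑ i, |x i|) / (k : ℝ)) with h | h <;> rw [h]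
    exacts [h1, h2]
  exact le_antisymm (csSup_le ⟨_, h1⟩ hub) (le_csSup ⟨_, hub⟩ hmem)
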